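/- (Fillmore) Let M be a d×d complex matrix with Tr(M) = 0. Then there exists a d×d unitary matrix V such that Δ(V* M V) = 0, i.e., every diagonal entry of V* M V is zero. -/

import Mathlib

open Matrix Complex

/-- The diagonal truncation map Δ: zeros out off-diagonal entries. -/
def delta {n : Type*} [DecidableEq n] (M : Matrix n n ℂ) : Matrix n n ℂ :=
  Matrix.diagonal (fun i => M i i)

lemma expand_A (d : ℕ) (A : Matrix (Fin d) (Fin d) ℂ) (u w : Fin d → ℂ) (x y : ℂ) :
    star (x • u + y • w) ⬝ᵥ (A *ᵥ (x • u + y • w)) =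
      (starRingEnd ℂ) x * x * (star u ⬝ᵥ (A *ᵥ u)) + (starRingEnd ℂ) x * y * (star u ⬝ᵥ (A *ᵥ w))
      + (starRingEnd ℂ) y * x * (star w ⬝ᵥ (A *ᵥ u)) + (starRingEnd ℂ) y * y * (star w ⬝ᵥ (A *ᵥ w)) := by
  simp [mulVec_add, mulVec_smul, dotProduct_add, add_dotProduct, dotProduct_smul,
    smul_dotProduct, star_add, star_smul, smul_smul]
  ring

lemma expand_norm (d : ℕ) (u w : Fin d → ℂ) (x y : ℂ) :
    star (x • u + y • w) ⬝ᵥ (x • u + y • w) =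
      (starRingEnd ℂ) x * x * (star u ⬝ᵥ u) + (starRingEnd ℂ) x * y * (star u ⬝ᵥ w)
      + (starRingEnd ℂ) y * x * (star w ⬝ᵥ u) + (starRingEnd ℂ) y * y * (star w ⬝ᵥ w) := by
  simp [dotProduct_add, add_dotProduct, dotProduct_smul, smul_dotProduct, star_add, star_smul,
    smul_smul]
  ring

lemma key_phi (b c : ℂ) : ∃ φ : ℝ, (Complex.exp (φ * I) * b + Complex.exp (-(φ * I)) * c).im = 0 := by
  set h : ℝ → ℝ := fun φ => (Complex.exp (φ * I) * b + Complex.exp (-(φ * I)) * c).im with hh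
  have hcont : Continuous h := by fun_prop
  have hpi : h Real.pi = -h 0 := by
    have he : Complex.exp (-((Real.pi:ℂ) * I)) = -1 := by
      rw [Complex.exp_neg, Complex.exp_pi_mul_I]; norm_num
    simp [hh, he, Complex.exp_pi_mul_I]
    ring
  rcases le_total (h 0) 0 with h0 | h0
  · have hm : (0:ℝ) ∈ Set.Icc (h 0) (h Real.pi) := ⟨h0, by rw [hpi]; linarith⟩
    obtain ⟨φ, _, hφ⟩ := intermediate_value_Icc (le_of_lt Real.pi_pos) hcont.continuousOn hm
    exact ⟨φ, hφ⟩
  · have hm : (0:ℝ) ∈ Set.Icc (h Real.pi) (h 0) := ⟨by rw [hpi]; linarith, h0⟩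
    obtain ⟨φ, _, hφ⟩ := intermediate_value_Icc' (le_of_lt Real.pi_pos) hcont.continuousOn hm
    exact ⟨φ, hφ⟩

lemma key_theta (s r : ℝ) (hs : 0 ≤ s) :
    ∃ θ : ℝ, Real.cos θ ^ 2 - s * Real.sin θ ^ 2 + r * Real.sin θ * Real.cos θ = 0 := by
  set g : ℝ → ℝ := fun θ => Real.cos θ ^ 2 - s * Real.sin θ ^ 2 + r * Real.sin θ * Real.cos θ
    with hg
  have hcont : Continuous g := by fun_prop
  have h0 : g 0 = 1 := by simp [hg]
  have h1 : g (Real.pi / 2) = -s := by simp [hg]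
  have hm : (0:ℝ) ∈ Set.Icc (g (Real.pi/2)) (g 0) := by rw [h0, h1]; exact ⟨by linarith, by linarith⟩
  obtain ⟨θ, _, hθ⟩ :=
    intermediate_value_Icc' (by positivity : (0:ℝ) ≤ Real.pi/2) hcont.continuousOn hm
  exact ⟨θ, hθ⟩

/-- 2×2 Toeplitz–Hausdorff-type lemma: convex combinations of two orthonormal numerical-range
values are attained on the span. -/
lemma pair_lemma (d : ℕ) (A : Matrix (Fin d) (Fin d) ℂ) (u w : Fin d → ℂ)
    (huu : star u ⬝ᵥ u = 1) (hww : star w ⬝ᵥ w = 1) (huw : star u ⬝ᵥ w = 0)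
    (hwu : star w ⬝ᵥ u = 0) (t : ℝ) (ht0 : 0 ≤ t) (ht1 : t ≤ 1) :
    ∃ x y : ℂ, star (x • u + y • w) ⬝ᵥ (x • u + y • w) = 1 ∧
      star (x • u + y • w) ⬝ᵥ (A *ᵥ (x • u + y • w)) =
        (t:ℂ) * (star u ⬝ᵥ (A *ᵥ u)) + (1 - (t:ℂ)) * (star w ⬝ᵥ (A *ᵥ w)) := by
  set α := star u ⬝ᵥ (A *ᵥ u) with hα
  set β := star w ⬝ᵥ (A *ᵥ w) with hβ
  set b := star u ⬝ᵥ (A *ᵥ w) with hb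
  set c := star w ⬝ᵥ (A *ᵥ u) with hc
  set γ : ℂ := (t:ℂ) * α + (1 - (t:ℂ)) * β with hγ
  by_cases hp : α - γ = 0
  · refine ⟨1, 0, ?_, ?_⟩
    · rw [expand_norm, huu, hww, huw, hwu]; simp
    · rw [expand_A, ← hα, ← hβ, ← hb, ← hc, show α = γ by linear_combination hp]
      simp
  · set p : ℂ := α - γ with hpdef
    have ht1' : t ≠ 1 := by
      intro h
      apply hp
      rw [hpdef, hγ, h]; push_cast; ring
    have h1t : (0:ℝ) < 1 - t := lt_of_le_of_ne (by linarith) (by intro h; exact ht1' (by linarith))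
    set s : ℝ := t / (1 - t) with hsdef
    have hs : 0 ≤ s := div_nonneg ht0 (le_of_lt h1t)
    have h1tc : (1:ℂ) - (t:ℂ) ≠ 0 := by
      have : ((1 - t : ℝ) : ℂ) ≠ 0 := Complex.ofReal_ne_zero.mpr (ne_of_gt h1t)
      push_cast at this
      exact this
    have hst : (s:ℂ) * (1 - (t:ℂ)) = (t:ℂ) := by
      rw [hsdef]
      push_cast
      exact div_mul_cancel₀ _ h1tc
    have hβγ : β = γ - (s:ℂ) * p := by
      rw [hpdef, hγ]
      linear_combination (α - β) * hst
    obtain ⟨φ, hφ⟩ := key_phi (b / p) (c / p)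
    set r : ℝ := (Complex.exp (φ * I) * (b / p) + Complex.exp (-(φ * I)) * (c / p)).re with hrdef
    have hz : Complex.exp (φ * I) * (b / p) + Complex.exp (-(φ * I)) * (c / p) = (r:ℂ) := by
      apply Complex.ext
      · rw [hrdef, Complex.ofReal_re]
      · rw [Complex.ofReal_im, hφ]
    have hcross : Complex.exp (φ * I) * b + Complex.exp (-(φ * I)) * c = (r:ℂ) * p := by
      have h2 : (Complex.exp (φ * I) * b + Complex.exp (-(φ * I)) * c) / p = (r:ℂ) := by
        rw [add_div, mul_div_assoc, mul_div_assoc]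
        exact hz
      rw [div_eq_iff hp] at h2
      exact h2
    obtain ⟨θ, hθ⟩ := key_theta s r hs
    have hg' : (Real.cos θ:ℂ)^2 - (s:ℂ) * (Real.sin θ:ℂ)^2
        + (r:ℂ) * (Real.sin θ:ℂ) * (Real.cos θ:ℂ) = 0 := by exact_mod_cast hθ
    have hpyth : (Real.cos θ:ℂ)^2 + (Real.sin θ:ℂ)^2 = 1 := by
      exact_mod_cast Real.cos_sq_add_sin_sq θ
    set x : ℂ := (Real.cos θ : ℂ)
    set y : ℂ := Complex.exp (φ * I) * (Real.sin θ : ℂ) with hy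
    have hconjx : (starRingEnd ℂ) x = x := Complex.conj_ofReal _
    have hconjy : (starRingEnd ℂ) y = Complex.exp (-(φ * I)) * (Real.sin θ : ℂ) := by
      rw [_root_.map_mul, Complex.conj_ofReal, ← Complex.exp_conj]
      congr 2
      simp
    have hee : Complex.exp (-(φ*I)) * Complex.exp (φ*I) = 1 := by
      rw [← Complex.exp_add]; simp
    refine ⟨x, y, ?_, ?_⟩
    · rw [expand_norm, huu, hww, huw, hwu, hconjx, hconjy, hy]
      linear_combination ((Real.sin θ:ℂ)^2) * hee + hpyth
    · rw [expand_A, ← hα, ← hβ, ← hb, ← hc, hconjx, hconjy, hy]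
      have hαp : α = p + γ := by rw [hpdef]; ring
      linear_combination x^2 * hαp + ((Real.sin θ:ℂ)^2 * β) * hee
        + ((Real.sin θ:ℂ) * x) * hcross + ((Real.sin θ:ℂ)^2) * hβγ + p * hg' + γ * hpyth

noncomputable def basisVec (d : ℕ) (j : Fin d) : Fin d → ℂ := fun i => if i = j then 1 else 0

lemma basisVec_star (d : ℕ) (j : Fin d) : star (basisVec d j) = basisVec d j := by
  funext i
  simp [basisVec, Pi.star_apply, apply_ite]

lemma basisVec_dot (d : ℕ) (j : Fin d) (v : Fin d → ℂ) : basisVec d j ⬝ᵥ v = v j := by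
  simp [basisVec, dotProduct, ite_mul]

lemma dot_basisVec (d : ℕ) (j : Fin d) (v : Fin d → ℂ) : v ⬝ᵥ basisVec d j = v j := by
  simp [basisVec, dotProduct, mul_ite]

lemma basisVec_quad (d : ℕ) (j : Fin d) (M : Matrix (Fin d) (Fin d) ℂ) :
    star (basisVec d j) ⬝ᵥ (M *ᵥ basisVec d j) = M j j := by
  rw [basisVec_star, basisVec_dot]
  simp [mulVec, dot_basisVec]

lemma aux_avg (k : ℕ) (S m : ℂ) :
    (((k:ℂ)+1)/((k:ℂ)+2)) * (S/((k:ℂ)+1)) + (1 - ((k:ℂ)+1)/((k:ℂ)+2)) * m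
      = (S+m)/((k:ℂ)+1+1) := by
  have h1 : ((k:ℂ)+1) ≠ 0 := by
    exact_mod_cast (Nat.cast_ne_zero (R := ℂ)).mpr (Nat.succ_ne_zero k)
  have h2 : ((k:ℂ)+2) ≠ 0 := by
    exact_mod_cast (Nat.cast_ne_zero (R := ℂ)).mpr (Nat.succ_ne_zero (k+1))
  have h3 : ((k:ℂ)+1+1) ≠ 0 := by
    have := h2
    rwa [show ((k:ℂ)+2) = (k:ℂ)+1+1 by ring] at this
  rw [eq_div_iff h3]
  have e2 : ((k:ℂ)+1)/((k:ℂ)+2) * ((k:ℂ)+2) = (k:ℂ)+1 := div_mul_cancel₀ _ h2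
  have e1 : S/((k:ℂ)+1) * ((k:ℂ)+1) = S := div_mul_cancel₀ _ h1
  linear_combination (S/((k:ℂ)+1)) * e2 + e1 - m * e2

/-- Inductive construction: a unit vector supported on indices ≤ k whose numerical-range value
is the running average of diagonal entries. -/
lemma running_mean (d : ℕ) (M : Matrix (Fin d) (Fin d) ℂ) :
    ∀ k : ℕ, k < d → ∃ v : Fin d → ℂ, (∀ i : Fin d, k < i.val → v i = 0) ∧
      star v ⬝ᵥ v = 1 ∧
      star v ⬝ᵥ (M *ᵥ v) =
        (∑ j ∈ Finset.range (k+1), if h : j < d then M ⟨j, h⟩ ⟨j, h⟩ else 0) / (k+1) := by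
  intro k
  induction k with
  | zero =>
    intro hk
    refine ⟨basisVec d ⟨0, hk⟩, ?_, ?_, ?_⟩
    · intro i hi
      simp only [basisVec, ite_eq_right_iff]
      intro h
      rw [h] at hi
      simp at hi
    · rw [basisVec_star, basisVec_dot]
      simp [basisVec]
    · rw [basisVec_quad]
      simp [hk]
  | succ k ih =>
    intro hk1
    have hk : k < d := Nat.lt_of_succ_lt hk1
    obtain ⟨v, hsupp, hnorm, hval⟩ := ih hk
    set w := basisVec d ⟨k+1, hk1⟩ with hw
    have hvw : star v ⬝ᵥ w = 0 := by
      rw [hw, dot_basisVec]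
      simp [hsupp ⟨k+1, hk1⟩ (by simp)]
    have hwv : star w ⬝ᵥ v = 0 := by
      rw [hw, basisVec_star, basisVec_dot]
      exact hsupp ⟨k+1, hk1⟩ (by simp)
    have hww : star w ⬝ᵥ w = 1 := by
      rw [hw, basisVec_star, basisVec_dot]
      simp [basisVec]
    set t : ℝ := (k+1) / (k+2) with ht
    have ht0 : 0 ≤ t := by positivity
    have ht1 : t ≤ 1 := by
      rw [ht]
      rw [div_le_one (by positivity)]
      linarith
    obtain ⟨x, y, hn, hv⟩ := pair_lemma d M v w hnorm hww hvw hwv t ht0 ht1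
    refine ⟨x • v + y • w, ?_, hn, ?_⟩
    · intro i hi
      have h1 : v i = 0 := hsupp i (by omega)
      have h2 : w i = 0 := by
        rw [hw]
        simp only [basisVec, ite_eq_right_iff]
        intro h
        rw [h] at hi
        simp at hi
      simp [h1, h2]
    · have hd : (if h : k+1 < d then M ⟨k+1, h⟩ ⟨k+1, h⟩ else 0) = M ⟨k+1, hk1⟩ ⟨k+1, hk1⟩ :=
        dif_pos hk1
      have htc : (t:ℂ) = ((k:ℂ)+1) / ((k:ℂ)+2) := by
        rw [ht]; push_cast; ring
      rw [hv, hval, basisVec_quad, htc]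
      conv_rhs => rw [Finset.sum_range_succ, hd]
      push_cast
      exact aux_avg k _ _

lemma exists_zero_vector (d : ℕ) (hd : 0 < d) (M : Matrix (Fin d) (Fin d) ℂ)
    (hM : Matrix.trace M = 0) :
    ∃ v : Fin d → ℂ, star v ⬝ᵥ v = 1 ∧ star v ⬝ᵥ (M *ᵥ v) = 0 := by
  obtain ⟨n, rfl⟩ : ∃ n, d = n + 1 := ⟨d - 1, (Nat.succ_pred_eq_of_pos hd).symm⟩
  obtain ⟨v, _, hnorm, hval⟩ := running_mean (n+1) M n (Nat.lt_succ_self n)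
  refine ⟨v, hnorm, ?_⟩
  rw [hval]
  have hsum : (∑ j ∈ Finset.range (n+1),
      if h : j < n+1 then M ⟨j, h⟩ ⟨j, h⟩ else 0) = Matrix.trace M := by
    rw [Matrix.trace, ← Fin.sum_univ_eq_sum_range]
    apply Finset.sum_congr rfl
    intro i _
    rw [dif_pos i.isLt]
    simp [Matrix.diag]
  rw [hsum, hM, zero_div]

lemma unit_extend (d : ℕ) (hd : 0 < d) (v : Fin d → ℂ) (hv : star v ⬝ᵥ v = 1) :
    ∃ V ∈ Matrix.unitaryGroup (Fin d) ℂ, (fun i => V i ⟨0, hd⟩) = v := by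
  set v' : EuclideanSpace ℂ (Fin d) := (WithLp.equiv 2 _).symm v with hv'
  have horth : Orthonormal ℂ (({⟨0, hd⟩} : Set (Fin d)).restrict (fun _ => v')) := by
    rw [orthonormal_iff_ite]
    intro i j
    have hij : i = j := Subsingleton.elim i j
    rw [if_pos hij, hij]
    have h2 : (inner ℂ v' v' : ℂ) = star v ⬝ᵥ v := by rw [dotProduct_comm]; rfl
    exact h2.trans hv
  obtain ⟨b, hb0⟩ := horth.exists_orthonormalBasis_extension_of_card_eq
    (by simp [finrank_euclideanSpace])
  have hb0' : b ⟨0, hd⟩ = v' := hb0 ⟨0, hd⟩ rfl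
  have hb := b.orthonormal
  rw [orthonormal_iff_ite] at hb
  refine ⟨Matrix.of (fun i j => b j i), ?_, ?_⟩
  · rw [Matrix.mem_unitaryGroup_iff']
    ext j k
    have hjk := hb j k
    rw [EuclideanSpace.inner_eq_star_dotProduct, dotProduct_comm] at hjk
    simp only [Matrix.mul_apply, Matrix.one_apply, Matrix.star_apply,
      Matrix.conjTranspose_apply, Matrix.of_apply]
    simp only [dotProduct, Pi.star_apply] at hjk
    convert hjk using 2
  · funext i
    have : b ⟨0, hd⟩ i = v i := by rw [hb0']; rfl
    simpa using this

lemma conj_entry (d : ℕ) (M V : Matrix (Fin d) (Fin d) ℂ) (j k : Fin d) :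
    (Vᴴ * M * V) j k = star (fun i => V i j) ⬝ᵥ (M *ᵥ (fun i => V i k)) := by
  simp only [Matrix.mul_apply, Matrix.conjTranspose_apply, mulVec, dotProduct, Pi.star_apply,
    Finset.sum_mul, Finset.mul_sum]
  rw [Finset.sum_comm]
  apply Finset.sum_congr rfl
  intro i _
  apply Finset.sum_congr rfl
  intro l _
  ring

lemma main_aux : ∀ d : ℕ, ∀ M : Matrix (Fin d) (Fin d) ℂ, Matrix.trace M = 0 →
    ∃ V ∈ Matrix.unitaryGroup (Fin d) ℂ, ∀ i, (Vᴴ * M * V) i i = 0 := by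
  intro d
  induction d with
  | zero => exact fun M _ => ⟨1, one_mem _, fun i => i.elim0⟩
  | succ n ih =>
    intro M hM
    obtain ⟨v, hv1, hv0⟩ := exists_zero_vector (n+1) (Nat.succ_pos n) M hM
    obtain ⟨V₁, hV₁, hcol⟩ := unit_extend (n+1) (Nat.succ_pos n) v hv1
    set A := V₁ᴴ * M * V₁ with hA
    have hA00 : A 0 0 = 0 := by
      rw [hA, show (0 : Fin (n+1)) = ⟨0, Nat.succ_pos n⟩ from rfl, conj_entry, hcol]
      exact hv0
    have hV₁' : V₁ * V₁ᴴ = 1 := by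
      have := (Matrix.mem_unitaryGroup_iff).mp hV₁
      exact this
    have htrA : Matrix.trace A = 0 := by
      rw [hA, Matrix.trace_mul_comm, ← mul_assoc, hV₁', one_mul, hM]
    set N : Matrix (Fin n) (Fin n) ℂ := Matrix.of (fun i j => A i.succ j.succ) with hN
    have htrN : Matrix.trace N = 0 := by
      have h1 : Matrix.trace A = A 0 0 + ∑ i : Fin n, A i.succ i.succ := by
        rw [Matrix.trace]
        exact Fin.sum_univ_succ _
      rw [Matrix.trace]
      have : ∑ i : Fin n, N.diag i = ∑ i : Fin n, A i.succ i.succ := rfl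
      rw [this]
      rw [h1, hA00] at htrA
      simpa using htrA
    obtain ⟨W, hW, hWdiag⟩ := ih N htrN
    set e : Fin 1 ⊕ Fin n ≃ Fin (n+1) := finSumFinEquiv.trans (finCongr (Nat.add_comm 1 n))
      with he
    have he0 : e (Sum.inl 0) = 0 := by
      rw [he]; apply Fin.ext; simp
    have hes : ∀ i : Fin n, e (Sum.inr i) = i.succ := by
      intro i; rw [he]; apply Fin.ext; simp [Nat.add_comm]
    set B : Matrix (Fin 1 ⊕ Fin n) (Fin 1 ⊕ Fin n) ℂ := Matrix.fromBlocks 1 0 0 W with hB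
    set V₂ : Matrix (Fin (n+1)) (Fin (n+1)) ℂ := B.submatrix e.symm e.symm with hV₂def
    have hBU : Bᴴ * B = 1 := by
      have hW' : Wᴴ * W = 1 := by
        have := (Matrix.mem_unitaryGroup_iff').mp hW
        exact this
      rw [hB]
      simp [Matrix.fromBlocks_conjTranspose, Matrix.fromBlocks_multiply, hW',
        Matrix.fromBlocks_one]
    have hV₂ : V₂ ∈ Matrix.unitaryGroup (Fin (n+1)) ℂ := by
      rw [Matrix.mem_unitaryGroup_iff']
      have : star V₂ = Bᴴ.submatrix e.symm e.symm := by
        rw [hV₂def]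
        rfl
      rw [this, hV₂def, Matrix.submatrix_mul_equiv, hBU, Matrix.submatrix_one_equiv]
    refine ⟨V₁ * V₂, mul_mem hV₁ hV₂, ?_⟩
    have hrw : (V₁ * V₂)ᴴ * M * (V₁ * V₂) = V₂ᴴ * A * V₂ := by
      rw [hA, Matrix.conjTranspose_mul]
      noncomm_ring
    rw [hrw]
    set A' : Matrix (Fin 1 ⊕ Fin n) (Fin 1 ⊕ Fin n) ℂ := A.submatrix e e with hA'
    have hAsub : A = A'.submatrix e.symm e.symm := by
      ext i j; simp [hA']
    have hprod : V₂ᴴ * A * V₂ = (Bᴴ * A' * B).submatrix e.symm e.symm := by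
      have h1 : V₂ᴴ = Bᴴ.submatrix e.symm e.symm := rfl
      rw [h1, hV₂def, hAsub, Matrix.submatrix_mul_equiv, Matrix.submatrix_mul_equiv]
    have hz : ∀ z : Fin 1 ⊕ Fin n, (Bᴴ * A' * B) z z = 0 := by
      have hblocks : Bᴴ * A' * B =
          Matrix.fromBlocks (A'.toBlocks₁₁) (A'.toBlocks₁₂ * W)
            (Wᴴ * A'.toBlocks₂₁) (Wᴴ * A'.toBlocks₂₂ * W) := by
        rw [← Matrix.fromBlocks_toBlocks A', hB]
        simp [Matrix.fromBlocks_conjTranspose, Matrix.fromBlocks_multiply, mul_assoc]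
      intro z
      rcases z with j | j
      · rw [hblocks]
        simp only [Matrix.fromBlocks_apply₁₁, Matrix.toBlocks₁₁, Matrix.of_apply]
        have : A' (Sum.inl j) (Sum.inl j) = A 0 0 := by
          rw [hA']
          have : (j : Fin 1) = 0 := Subsingleton.elim _ _
          rw [Matrix.submatrix_apply, this, he0]
        rw [this, hA00]
      · rw [hblocks]
        have hN22 : A'.toBlocks₂₂ = N := by
          ext i k
          rw [Matrix.toBlocks₂₂]
          simp [hA', hes, hN]
        simp only [Matrix.fromBlocks_apply₂₂]
        rw [hN22]
        exact hWdiag j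
    intro i
    rw [hprod, Matrix.submatrix_apply]
    exact hz (e.symm i)

/-- Fillmore's theorem: any trace-zero matrix is unitarily equivalent to a matrix
with zero diagonal. -/
theorem stmt5 (d : ℕ) (M : Matrix (Fin d) (Fin d) ℂ) (hM : Matrix.trace M = 0) :
    ∃ V ∈ Matrix.unitaryGroup (Fin d) ℂ, delta (Vᴴ * M * V) = 0 := by
  obtain ⟨V, hV, hdiag⟩ := main_aux d M hM
  refine ⟨V, hV, ?_⟩
  ext i j
  by_cases h : i = j
  · subst h
    simp [delta, Matrix.diagonal_apply_eq, hdiag i]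
  · simp [delta, Matrix.diagonal_apply_ne _ h]
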